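/- If a_j ≠ 0 for every j = 1,…,M, then the zig-zag matrix Z(a,c) is invertible and its inverse is again a zig-zag matrix: Z(a,c)^{-1} = Z(b,d), where b_j = 1/a_j for j = 1,…,M and d_k = −c_k/(a_k a_{k+1}) for k = 1,…,M−1; that is, Z(a,c) · Z(b,d) = I and Z(b,d) · Z(a,c) = I. -/
import Mathlib


/-- The `M × M` zig-zag matrix `Z(a,c)` built from the (1-based) diagonal
parameters `a₁, …, a_M` and off-diagonal parameters `c₁, …, c_{M-1}`:
`Z[i,i] = aᵢ` for all `i`; for every even (1-based) row index `i`,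
`Z[i,i-1] = c_{i-1}` and (when `i+1 ≤ M`) `Z[i,i+1] = cᵢ`; all other
entries vanish.  (Rows/columns `i : Fin M` carry the 1-based label `i.val + 1`.) -/
def zigzag (M : ℕ) (a c : ℕ → ℝ) : Matrix (Fin M) (Fin M) ℝ :=
  Matrix.of fun i j =>
    if i.val = j.val then a (i.val + 1)
    else if (i.val + 1) % 2 = 0 ∧ j.val + 1 = i.val then c (j.val + 1)
    else if (i.val + 1) % 2 = 0 ∧ j.val = i.val + 1 then c (i.val + 1)
    else 0

def zf (a c : ℕ → ℝ) (i j : ℕ) : ℝ :=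
  if i = j then a (i + 1)
  else if (i + 1) % 2 = 0 ∧ j + 1 = i then c (j + 1)
  else if (i + 1) % 2 = 0 ∧ j = i + 1 then c (i + 1)
  else 0

lemma zigzag_apply (M : ℕ) (a c : ℕ → ℝ) (i j : Fin M) :
    zigzag M a c i j = zf a c i.val j.val := rfl

lemma zigzag_mul (M : ℕ) (a c b d : ℕ → ℝ)
    (hab : ∀ r, 1 ≤ r → r ≤ M → a r * b r = 1)
    (h1 : ∀ r, 2 ≤ r → r ≤ M → r % 2 = 0 → c (r-1) * b (r-1) + a r * d (r-1) = 0)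
    (h2 : ∀ r, 2 ≤ r → r + 1 ≤ M → r % 2 = 0 → a r * d r + c r * b (r+1) = 0) :
    zigzag M a c * zigzag M b d = 1 := by
  ext i j
  have hi := i.isLt
  have hj := j.isLt
  rw [Matrix.mul_apply]
  simp only [zigzag_apply, Matrix.one_apply, Fin.ext_iff]
  have hsum : ∑ m ∈ Finset.range M, zf a c i.val m * zf b d m j.val
      = ∑ k : Fin M, zf a c i.val k.val * zf b d k.val j.val :=
    (Fin.sum_univ_eq_sum_range (fun m => zf a c i.val m * zf b d m j.val) M).symm
  rw [← hsum]
  rcases Nat.mod_two_eq_zero_or_one i.val with he | ho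
  · -- row i.val even (1-based odd): diagonal-only row
    have hpar : (i.val + 1) % 2 ≠ 0 := by omega
    rw [Finset.sum_eq_single i.val]
    · have e1 : zf a c i.val i.val = a (i.val + 1) := by simp [zf]
      have e2 : zf b d i.val j.val = if i.val = j.val then b (i.val + 1) else 0 := by
        simp only [zf]
        split_ifs <;> first | rfl | omega
      rw [e1, e2]
      by_cases hij : i.val = j.val
      · rw [if_pos hij, if_pos hij]
        exact hab _ (by omega) (by omega)
      · rw [if_neg hij, if_neg hij, mul_zero]
    · intro m _ hm
      have hz : zf a c i.val m = 0 := by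
        simp only [zf]
        split_ifs <;> first | rfl | omega
      rw [hz, zero_mul]
    · intro h; exact absurd (Finset.mem_range.mpr hi) h
  · -- row i.val odd (1-based even)
    obtain ⟨p, hp⟩ : ∃ p, i.val = p + 1 := ⟨i.val - 1, by omega⟩
    have hpe : p % 2 = 0 := by omega
    have hfilter : ∑ m ∈ Finset.range M, zf a c i.val m * zf b d m j.val
        = ∑ m ∈ (Finset.range M).filter (fun m => m ∈ ({p, p+1, p+2} : Finset ℕ)),
            zf a c i.val m * zf b d m j.val := by
      refine (Finset.sum_filter_of_ne ?_).symm
      intro m _ hne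
      have hz : zf a c i.val m ≠ 0 := fun h => hne (by simp [h])
      simp only [zf] at hz
      simp only [Finset.mem_insert, Finset.mem_singleton]
      by_contra hcon
      apply hz
      split_ifs <;> first | rfl | omega
    rw [hfilter]
    have key1 : zf a c i.val p = c (p + 1) := by
      simp only [zf]
      rw [if_neg (by omega), if_pos ⟨by omega, by omega⟩]
    have key2 : zf a c i.val (p+1) = a (p + 2) := by
      simp only [zf]
      rw [if_pos (by omega), hp]
    have key3 : zf a c i.val (p+2) = c (p + 2) := by
      simp only [zf]
      rw [if_neg (by omega), if_neg (by omega), if_pos ⟨by omega, by omega⟩, hp]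
    have w1 : zf b d p j.val = if p = j.val then b (p+1) else 0 := by
      simp only [zf]
      split_ifs <;> first | rfl | omega
    have w3 : zf b d (p+2) j.val = if p + 2 = j.val then b (p+3) else 0 := by
      simp only [zf]
      split_ifs <;> first | rfl | omega | (congr 1; omega)
    have w2 : zf b d (p+1) j.val =
        if p + 1 = j.val then b (p+2)
        else if j.val = p then d (p+1)
        else if j.val = p + 2 then d (p+2) else 0 := by
      simp only [zf]
      split_ifs <;> first | rfl | omega | (congr 1; omega)
    have h1' : c (p+1) * b (p+1) + a (p+2) * d (p+1) = 0 := by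
      have := h1 (p+2) (by omega) (by omega) (by omega)
      rwa [show p + 2 - 1 = p + 1 by omega] at this
    have hab' : a (p+2) * b (p+2) = 1 := hab (p+2) (by omega) (by omega)
    by_cases hM : p + 2 < M
    · have hset : (Finset.range M).filter (fun m => m ∈ ({p, p+1, p+2} : Finset ℕ))
          = {p, p+1, p+2} := by
        ext m
        simp only [Finset.mem_filter, Finset.mem_range, Finset.mem_insert,
          Finset.mem_singleton]
        omega
      have h2' : a (p+2) * d (p+2) + c (p+2) * b (p+3) = 0 :=
        h2 (p+2) (by omega) (by omega) (by omega)
      rw [hset, Finset.sum_insert (by simp), Finset.sum_insert (by simp),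
        Finset.sum_singleton, key1, key2, key3, w1, w2, w3]
      split_ifs <;> first | omega | ring1 |
        (ring_nf; ring_nf at h1' hab' h2'; first | linarith [h1'] | linarith [hab'] | linarith [h2'])
    · have hset : (Finset.range M).filter (fun m => m ∈ ({p, p+1, p+2} : Finset ℕ))
          = {p, p+1} := by
        ext m
        simp only [Finset.mem_filter, Finset.mem_range, Finset.mem_insert,
          Finset.mem_singleton]
        omega
      rw [hset, Finset.sum_insert (by simp), Finset.sum_singleton, key1, key2, w1, w2]
      split_ifs <;> first | omega | ring1 |
        (ring_nf; ring_nf at h1' hab'; first | linarith [h1'] | linarith [hab'])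
/-- If all diagonal entries `a₁, …, a_M` are nonzero then `Z(a,c)` is
invertible, and its inverse is the zig-zag matrix `Z(b,d)` with `bⱼ = 1/aⱼ`
and `d_k = -c_k/(a_k a_{k+1})`; that is, `Z(a,c) · Z(b,d) = I` and
`Z(b,d) · Z(a,c) = I`. -/
theorem zigzag_inv (M : ℕ) (a c : ℕ → ℝ)
    (ha : ∀ j, 1 ≤ j → j ≤ M → a j ≠ 0) :
    IsUnit (zigzag M a c) ∧
    zigzag M a c
        * zigzag M (fun j => (a j)⁻¹) (fun k => -c k / (a k * a (k + 1))) = 1 ∧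
    zigzag M (fun j => (a j)⁻¹) (fun k => -c k / (a k * a (k + 1)))
        * zigzag M a c = 1 ∧
    (zigzag M a c)⁻¹
        = zigzag M (fun j => (a j)⁻¹) (fun k => -c k / (a k * a (k + 1))) := by
  have hR : zigzag M a c
      * zigzag M (fun j => (a j)⁻¹) (fun k => -c k / (a k * a (k + 1))) = 1 := by
    apply zigzag_mul
    · intro r h1r hrM
      exact mul_inv_cancel₀ (ha r h1r hrM)
    · intro r h2r hrM _
      have h₁ : a (r - 1) ≠ 0 := ha _ (by omega) (by omega)
      have h₂ : a r ≠ 0 := ha _ (by omega) (by omega)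
      rw [show r - 1 + 1 = r by omega]
      field_simp
      ring
    · intro r h2r hrM _
      have h₁ : a r ≠ 0 := ha _ (by omega) (by omega)
      have h₂ : a (r + 1) ≠ 0 := ha _ (by omega) (by omega)
      field_simp
      ring
  have hL : zigzag M (fun j => (a j)⁻¹) (fun k => -c k / (a k * a (k + 1)))
      * zigzag M a c = 1 := by
    apply zigzag_mul
    · intro r h1r hrM
      exact inv_mul_cancel₀ (ha r h1r hrM)
    · intro r h2r hrM _
      have h₁ : a (r - 1) ≠ 0 := ha _ (by omega) (by omega)
      have h₂ : a r ≠ 0 := ha _ (by omega) (by omega)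
      rw [show r - 1 + 1 = r by omega]
      field_simp
      ring
    · intro r h2r hrM _
      have h₁ : a r ≠ 0 := ha _ (by omega) (by omega)
      have h₂ : a (r + 1) ≠ 0 := ha _ (by omega) (by omega)
      field_simp
      ring
  exact ⟨⟨⟨_, _, hR, hL⟩, rfl⟩, hR, hL, Matrix.inv_eq_right_inv hR⟩
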